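/- If the sequence a with a_1 = 1, a_2 = 3, a_{2n-1} = 2a_{n-1} + n, a_{2n} = a_{n-1} + a_n + n + 1 satisfies a_k < (k/2)·log₂(2k) for all k with 10 < k ≤ n for some n ≥ 21, then a_{n+1} < ((n+1)/2)·log₂(2(n+1)). -/

import Mathlib

open Real

lemma logb_two_double (x : ℝ) (hx : 0 < x) :
    Real.logb 2 (2 * x) = 1 + Real.logb 2 x := by
  rw [Real.logb_mul (by norm_num) (ne_of_gt hx), Real.logb_self_eq_one (by norm_num)]

theorem stmt_15 (a : ℕ → ℕ) (h1 : a 1 = 1) (h2 : a 2 = 3)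
    (hodd : ∀ n : ℕ, 2 ≤ n → a (2 * n - 1) = 2 * a (n - 1) + n)
    (heven : ∀ n : ℕ, 2 ≤ n → a (2 * n) = a (n - 1) + a n + n + 1)
    (n : ℕ) (hn : 21 ≤ n)
    (hind : ∀ k : ℕ, 10 < k → k ≤ n → (a k : ℝ) < (k : ℝ) / 2 * Real.logb 2 (2 * k)) :
    (a (n + 1) : ℝ) < ((n : ℝ) + 1) / 2 * Real.logb 2 (2 * ((n : ℝ) + 1)) := by
  rcases Nat.even_or_odd n with ⟨k, hk⟩ | ⟨k, hk⟩
  · -- n = 2k even, n+1 = 2(k+1)-1 odd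
    have hk11 : 11 ≤ k := by omega
    have hrec : a (n + 1) = 2 * a k + (k + 1) := by
      have h := hodd (k + 1) (by omega)
      have e1 : 2 * (k + 1) - 1 = n + 1 := by omega
      have e2 : k + 1 - 1 = k := rfl
      rw [e1, e2] at h
      exact h
    have hak := hind k (by omega) (by omega)
    set x : ℝ := (k : ℝ) with hx
    have hx11 : (11 : ℝ) ≤ x := by rw [hx]; exact_mod_cast hk11
    have hcast : ((n : ℝ)) = 2 * x := by
      rw [hk]; push_cast; ring
    have hE : Real.logb 2 (2 * ((n:ℝ) + 1)) = 1 + Real.logb 2 (2 * x + 1) := by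
      rw [hcast, show 2 * (2 * x + 1) = 2 * (2 * x + 1) by ring]
      rw [logb_two_double (2 * x + 1) (by linarith)]
    have hM : Real.logb 2 (2 * x) ≤ Real.logb 2 (2 * x + 1) :=
      Real.logb_le_logb_of_le (by norm_num) (by linarith) (by linarith)
    have h1L : (1 : ℝ) ≤ Real.logb 2 (2 * x) := by
      have := Real.logb_le_logb_of_le (b := 2) (by norm_num) (x := 2) (by norm_num)
        (y := 2 * x) (by linarith)
      simpa [Real.logb_self_eq_one (show (1:ℝ) < 2 by norm_num)] using this
    rw [hrec, hE, hcast]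
    push_cast
    nlinarith [hak, hM, h1L]
  · -- n = 2k+1 odd, n+1 = 2(k+1) even
    have hk10 : 10 ≤ k := by omega
    have hrec : a (n + 1) = a k + a (k + 1) + (k + 1) + 1 := by
      have h := heven (k + 1) (by omega)
      have e1 : 2 * (k + 1) = n + 1 := by omega
      have e2 : k + 1 - 1 = k := rfl
      rw [e1, e2] at h
      exact h
    have hak1 := hind (k + 1) (by omega) (by omega)
    set x : ℝ := (k : ℝ) with hx
    have hcast : ((n : ℝ)) = 2 * x + 1 := by
      rw [hk]; push_cast; ring
    have hE : Real.logb 2 (2 * ((n:ℝ) + 1)) = 1 + Real.logb 2 (2 * x + 2) := by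
      have hx0 : (0:ℝ) ≤ x := by positivity
      rw [hcast, show 2 * (2 * x + 1 + 1) = 2 * (2 * x + 2) by ring]
      rw [logb_two_double (2 * x + 2) (by linarith)]
    have hL2 : Real.logb 2 (2 * ((k:ℝ) + 1)) = Real.logb 2 (2 * x + 2) := by
      norm_num; ring_nf; rfl
    rcases eq_or_lt_of_le hk10 with hkeq | hk11
    · -- k = 10, n = 21
      have hk10' : k = 10 := hkeq.symm
      subst hk10'
      have ha4 : a 4 = 7 := by
        have h := heven 2 (by norm_num)
        norm_num [h1, h2] at h; omega
      have ha5 : a 5 = 9 := by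
        have h := hodd 3 (by norm_num)
        norm_num [h2] at h; omega
      have ha10 : a 10 = 22 := by
        have h := heven 5 (by norm_num)
        norm_num [ha4, ha5] at h; omega
      have h46 : (46 : ℝ) ≤ 11 * Real.logb 2 22 := by
        have hle : ((2:ℝ) ^ (46:ℕ)) ≤ (22:ℝ) ^ (11:ℕ) := by norm_num
        have := Real.logb_le_logb_of_le (b := 2) (by norm_num)
          (x := (2:ℝ) ^ (46:ℕ)) (by positivity) hle
        rw [Real.logb_pow, Real.logb_pow,
          Real.logb_self_eq_one (show (1:ℝ) < 2 by norm_num)] at this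
        push_cast at this
        linarith
      have e22 : (2 * x + 2 : ℝ) = 22 := by norm_num [hx]
      push_cast at hak1
      norm_num at hak1
      rw [hrec, hE, e22, hcast]
      push_cast [ha10]
      norm_num [hx]
      nlinarith [hak1, h46]
    · -- k ≥ 11
      have hak := hind k (by omega) (by omega)
      have hx11 : (11 : ℝ) ≤ x := by rw [hx]; exact_mod_cast hk11
      have hM : Real.logb 2 (2 * x) ≤ Real.logb 2 (2 * x + 2) :=
        Real.logb_le_logb_of_le (by norm_num) (by linarith) (by linarith)
      have h2L : (2 : ℝ) ≤ Real.logb 2 (2 * x + 2) := by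
        have h4 : Real.logb 2 (4:ℝ) = 2 := by
          rw [show (4:ℝ) = 2 ^ (2:ℕ) by norm_num, Real.logb_pow,
            Real.logb_self_eq_one (show (1:ℝ) < 2 by norm_num)]
          norm_num
        have := Real.logb_le_logb_of_le (b := 2) (by norm_num) (x := (4:ℝ)) (by norm_num)
          (y := 2 * x + 2) (by linarith)
        linarith [this, h4.ge, h4.le]
      rw [hrec, hE, hcast]
      push_cast
      push_cast at hak1
      rw [hL2] at hak1
      nlinarith [hak, hak1, hM, h2L]
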